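/- Assume Φ'_β is quasi-complete and let {μ_t}_{t≥0} be a continuous convolution semigroup of Radon probability measures on Φ'_β. Then for every T > 0 the family {μ_t : t ∈ [0,T]} is uniformly tight. -/

import Mathlib

open MeasureTheory ProbabilityTheory Complex Filter Set
open scoped ENNReal NNReal Topology

noncomputable section

variable {Φ : Type*} [AddCommGroup Φ] [Module ℝ Φ] [TopologicalSpace Φ]

/-- The projection `π_{φ₁,…,φₙ} : Φ' → ℝⁿ`, `f ↦ (f[φ₁],…,f[φₙ])`. -/
def cylProj {Φ : Type*} [AddCommGroup Φ] [Module ℝ Φ] [TopologicalSpace Φ]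
    {n : ℕ} (φ : Fin n → Φ) : (Φ →L[ℝ] ℝ) → (Fin n → ℝ) :=
  fun f i => f (φ i)

/-- The collection of cylindrical subsets of `Φ'` based on `M ⊆ Φ`. -/
def cylSets (M : Set Φ) : Set (Set (Φ →L[ℝ] ℝ)) :=
  {Z | ∃ (n : ℕ) (φ : Fin n → Φ), (∀ i, φ i ∈ M) ∧
    ∃ A : Set (Fin n → ℝ), MeasurableSet A ∧ Z = cylProj φ ⁻¹' A}

/-- A Radon measure: every Borel set can be inner approximated by compact sets. -/
def IsRadon {X : Type*} [TopologicalSpace X] [MeasurableSpace X] (μ : Measure X) : Prop :=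
  ∀ A : Set X, MeasurableSet A → ∀ ε : ℝ≥0∞, 0 < ε →
    ∃ K, K ⊆ A ∧ IsCompact K ∧ μ (A \ K) < ε

/-- Convolution of two measures. -/
def conv' {G : Type*} [Add G] [MeasurableSpace G] (μ ν : Measure G) : Measure G :=
  Measure.map (fun p : G × G => p.1 + p.2) (μ.prod ν)

/-- `n`-fold convolution power, with the convention `μ^{∗0} = δ₀`. -/
def convPow {G : Type*} [AddMonoid G] [MeasurableSpace G] (μ : Measure G) : ℕ → Measure G
  | 0 => Measure.dirac 0
  | n + 1 => conv' (convPow μ n) μ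

/-- A Hilbertian seminorm: induced by a symmetric nonnegative bilinear form. -/
def IsHilbertian (p : Seminorm ℝ Φ) : Prop :=
  ∃ B : Φ →ₗ[ℝ] Φ →ₗ[ℝ] ℝ, (∀ x y, B x y = B y x) ∧ (∀ x, 0 ≤ B x x) ∧
    ∀ x, p x = Real.sqrt (B x x)

/-- `e` is an orthonormal basis for the Hilbertian seminorm `q` with bilinear form `B`:
orthonormality together with density of the span in the `q`-topology. -/
def IsONBasisFor (q : Seminorm ℝ Φ) (B : Φ →ₗ[ℝ] Φ →ₗ[ℝ] ℝ) (e : ℕ → Φ) : Prop :=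
  (∀ x y, B x y = B y x) ∧ (∀ x, q x = Real.sqrt (B x x)) ∧
  (∀ i j, B (e i) (e j) = if i = j then 1 else 0) ∧
  ∀ φ : Φ, ∀ ε : ℝ, 0 < ε → ∃ c : ℕ →₀ ℝ, q (φ - c.sum fun i a => a • e i) < ε

/-- The canonical inclusion `i_{p,q} : Φ_q → Φ_p` (for `p ≤ q`) is Hilbert–Schmidt. -/
def IsHSPair (p q : Seminorm ℝ Φ) : Prop :=
  p ≤ q ∧ ∃ (B : Φ →ₗ[ℝ] Φ →ₗ[ℝ] ℝ) (e : ℕ → Φ),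
    IsONBasisFor q B e ∧ Summable (fun n => (p (e n)) ^ 2)

/-- Auxiliary: the topology of `Φ` is generated by the seminorm family `P`. -/
def GeneratesTopology {ι : Type} [Nonempty ι] (P : SeminormFamily ℝ Φ ι) : Prop :=
  WithSeminorms P

/-- A nuclear space: the topology is generated by a family of Hilbertian seminorms such that
each member is dominated by another member with Hilbert–Schmidt canonical inclusion. -/
class IsNuclearSpace (Φ : Type*) [AddCommGroup Φ] [Module ℝ Φ] [TopologicalSpace Φ] : Prop where
  out : ∃ (ι : Type) (hne : Nonempty ι) (P : SeminormFamily ℝ Φ ι),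
    @GeneratesTopology Φ _ _ _ ι hne P ∧
    (∀ i, IsHilbertian (P i)) ∧ ∀ i, ∃ j, IsHSPair (P i) (P j)

section AuxLemmas

open Pointwise

lemma urysohn_aux {X : Type*} [AddCommGroup X] [Module ℝ X] [TopologicalSpace X]
    [IsTopologicalAddGroup X] [ContinuousSMul ℝ X] [LocallyConvexSpace ℝ X]
    {C : Set X} (hC : IsCompact C) {V : Set X} (hV : V ∈ 𝓝 (0 : X)) :
    ∃ g : X → ℝ, Continuous g ∧ (∀ y, g y ∈ Set.Icc (0:ℝ) 1) ∧ (∀ y ∈ C, g y = 1) ∧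
      ∀ y, g y ≠ 0 → ∃ c ∈ C, y - c ∈ V := by
  obtain ⟨W₀, ⟨hW₀mem, hW₀conv⟩, hW₀sub⟩ :=
    (LocallyConvexSpace.convex_basis_zero ℝ X).mem_iff.1 hV
  set W : Set X := interior W₀ with hWdef
  have hWopen : IsOpen W := isOpen_interior
  have hWconv : Convex ℝ W := hW₀conv.interior
  have h0W : (0 : X) ∈ W := mem_interior_iff_mem_nhds.2 hW₀mem
  have hWnhds : W ∈ 𝓝 (0 : X) := hWopen.mem_nhds h0W
  have hWV : W ⊆ V := interior_subset.trans hW₀sub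
  -- the bump function
  set f : X → ℝ := fun y => max 0 (min 1 (2 - 2 * gauge W y)) with hfdef
  have hfcont : Continuous f :=
    continuous_const.max (continuous_const.min
      (continuous_const.sub (continuous_const.mul (continuous_gauge hWconv hWnhds))))
  have hf01 : ∀ y, f y ∈ Set.Icc (0:ℝ) 1 := by
    intro y
    constructor
    · exact le_max_left _ _
    · apply max_le (by norm_num)
      exact min_le_left _ _
  have hfW : ∀ y, f y ≠ 0 → y ∈ W := by
    intro y hy
    have h1 : 0 < min 1 (2 - 2 * gauge W y) := by
      rcases lt_or_ge 0 (min 1 (2 - 2 * gauge W y)) with h | h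
      · exact h
      · exact absurd (max_eq_left h) hy
    have h2 : gauge W y < 1 := by
      have := lt_of_lt_of_le h1 (min_le_right _ _)
      linarith
    have := gauge_lt_one_eq_self_of_isOpen hWconv h0W hWopen
    rw [← this]; exact h2
  have hfone : ∀ y, gauge W y ≤ 1 / 2 → f y = 1 := by
    intro y hy
    have h1 : (1:ℝ) ≤ 2 - 2 * gauge W y := by linarith
    simp only [hfdef]
    rw [min_eq_left h1, max_eq_right (by norm_num : (0:ℝ) ≤ 1)]
  -- half-size neighborhood
  set H : Set X := (2⁻¹ : ℝ) • W with hHdef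
  have hHgauge : ∀ y ∈ H, gauge W y ≤ 1 / 2 := by
    rintro y ⟨w, hw, rfl⟩
    have := gauge_smul_of_nonneg (by norm_num : (0:ℝ) ≤ 2⁻¹) (s := W) w
    rw [this, smul_eq_mul]
    have hle : gauge W w ≤ 1 := gauge_le_one_of_mem hw
    linarith
  have hHopen : IsOpen H := hWopen.smul₀ (by norm_num : (2⁻¹:ℝ) ≠ 0)
  have h0H : (0 : X) ∈ H := ⟨0, h0W, smul_zero _⟩
  -- finite subcover
  have hcov : C ⊆ ⋃ i ∈ C, {y | y - i ∈ H} := by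
    intro c hc
    refine mem_iUnion₂.2 ⟨c, hc, ?_⟩
    simp [h0H]
  obtain ⟨s, hsC, hsfin, hscov⟩ := hC.elim_finite_subcover_image
    (fun i _ => (hHopen.preimage (continuous_id.sub continuous_const) : IsOpen {y | y - i ∈ H}))
    hcov
  refine ⟨fun y => 1 - ∏ c ∈ hsfin.toFinset, (1 - f (y - c)), ?_, ?_, ?_, ?_⟩
  · exact continuous_const.sub (continuous_finset_prod _ fun c _ =>
      continuous_const.sub (hfcont.comp (continuous_id.sub continuous_const)))
  · intro y
    have hprod : (∏ c ∈ hsfin.toFinset, (1 - f (y - c))) ∈ Set.Icc (0:ℝ) 1 := by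
      constructor
      · exact Finset.prod_nonneg fun c _ => by have := (hf01 (y - c)).2; linarith
      · exact Finset.prod_le_one (fun c _ => by have := (hf01 (y - c)).2; linarith)
          (fun c _ => by have := (hf01 (y - c)).1; linarith)
    exact ⟨by dsimp only; linarith [hprod.2], by dsimp only; linarith [hprod.1]⟩
  · intro y hy
    obtain ⟨i, hi⟩ := mem_iUnion₂.1 (hscov hy)
    obtain ⟨his, hyi⟩ := hi
    have hyiH : y - i ∈ H := hyi
    have hzero : (1 : ℝ) - f (y - i) = 0 := by
      rw [hfone _ (hHgauge _ hyiH)]; ring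
    show 1 - ∏ c ∈ hsfin.toFinset, (1 - f (y - c)) = 1
    rw [Finset.prod_eq_zero (hsfin.mem_toFinset.2 his) hzero]
    ring
  · intro y hy
    have : ∃ c ∈ hsfin.toFinset, (1 : ℝ) - f (y - c) ≠ 1 := by
      by_contra hcon
      push_neg at hcon
      refine hy ?_
      show 1 - ∏ c ∈ hsfin.toFinset, (1 - f (y - c)) = 0
      rw [Finset.prod_eq_one hcon]; ring
    obtain ⟨c, hcs, hc⟩ := this
    have hfc : f (y - c) ≠ 0 := fun h => hc (by rw [h]; ring)
    exact ⟨c, hsC (hsfin.mem_toFinset.1 hcs), hWV (hfW _ hfc)⟩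


lemma conc_aux {X : Type*} [AddCommGroup X] [MeasurableSpace X]
    {μ ν κ : Measure X} [IsProbabilityMeasure μ] [IsProbabilityMeasure ν]
    [IsProbabilityMeasure κ]
    (h : conv' μ ν = κ) {M : Set X} (hM : MeasurableSet M) {η : ℝ≥0∞}
    (hκ : κ Mᶜ < η) :
    ∃ x : X, ν ((fun y => x + y) ⁻¹' Mᶜ) < 2 * η := by
  by_contra hcon
  push_neg at hcon
  -- the addition map is a.e. measurable
  have hae : AEMeasurable (fun p : X × X => p.1 + p.2) (μ.prod ν) := by
    by_contra hnot
    have h0 : conv' μ ν = 0 := Measure.map_of_not_aemeasurable hnot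
    rw [h] at h0
    have : κ Set.univ = 1 := measure_univ
    rw [h0] at this
    simp at this
  set g := hae.mk _ with hgdef
  have hgmeas : Measurable g := hae.measurable_mk
  have hκM : κ Mᶜ = (μ.prod ν) (g ⁻¹' Mᶜ) := by
    rw [← h]
    show Measure.map (fun p : X × X => p.1 + p.2) (μ.prod ν) Mᶜ = _
    rw [Measure.map_congr hae.ae_eq_mk, Measure.map_apply hgmeas hM.compl]
  have hprod : (μ.prod ν) (g ⁻¹' Mᶜ) = ∫⁻ x, ν (Prod.mk x ⁻¹' (g ⁻¹' Mᶜ)) ∂μ :=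
    Measure.prod_apply (hgmeas hM.compl)
  -- a.e. slices agree with translates
  have hslice : ∀ᵐ x ∂μ, ∀ᵐ y ∂ν, (x + y) = g (x, y) :=
    Measure.ae_ae_of_ae_prod hae.ae_eq_mk
  have hbound : ∀ᵐ x ∂μ, 2 * η ≤ ν (Prod.mk x ⁻¹' (g ⁻¹' Mᶜ)) := by
    filter_upwards [hslice] with x hx
    have : ν (Prod.mk x ⁻¹' (g ⁻¹' Mᶜ)) = ν ((fun y => x + y) ⁻¹' Mᶜ) := by
      apply measure_congr
      rw [Filter.eventuallyEq_set]
      filter_upwards [hx] with y hy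
      simp only [Set.mem_preimage]
      rw [← hy]
    rw [this]
    exact hcon x
  have hge : 2 * η ≤ ∫⁻ x, ν (Prod.mk x ⁻¹' (g ⁻¹' Mᶜ)) ∂μ := by
    calc 2 * η = ∫⁻ _, 2 * η ∂μ := by simp
    _ ≤ _ := lintegral_mono_ae hbound
  have : κ Mᶜ < κ Mᶜ := by
    calc κ Mᶜ < η := hκ
    _ ≤ 2 * η := by
        rw [two_mul]; exact le_self_add
    _ ≤ κ Mᶜ := by rw [hκM, hprod]; exact hge
  exact lt_irrefl _ this

lemma inter_nonempty_aux {X : Type*} [MeasurableSpace X] {μ : Measure X}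
    [IsProbabilityMeasure μ] {A B : Set X} (h : μ Aᶜ + μ Bᶜ < 1) :
    (A ∩ B).Nonempty := by
  rw [Set.nonempty_iff_ne_empty]
  intro hempty
  have : (A ∩ B)ᶜ = Set.univ := by rw [← Set.compl_empty, hempty]
  have h1 : (1 : ℝ≥0∞) ≤ μ Aᶜ + μ Bᶜ := by
    calc (1:ℝ≥0∞) = μ Set.univ := measure_univ.symm
    _ = μ (A ∩ B)ᶜ := by rw [this]
    _ = μ (Aᶜ ∪ Bᶜ) := by rw [Set.compl_inter]
    _ ≤ μ Aᶜ + μ Bᶜ := measure_union_le _ _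
  exact absurd h (not_lt.2 h1)


end AuxLemmas

variable [MeasurableSpace (Φ →L[ℝ] ℝ)]

/-- Characteristic function of a measure on the dual. -/
def charFun' (μ : Measure (Φ →L[ℝ] ℝ)) (φ : Φ) : ℂ :=
  ∫ f, Complex.exp (Complex.I * (f φ : ℂ)) ∂μ

/-- Dual "norm" `p'(f) = sup {|f[φ]| : p(φ) ≤ 1}`, with values in `ℝ≥0∞`. -/
def dualNorm (p : Seminorm ℝ Φ) (f : Φ →L[ℝ] ℝ) : ℝ≥0∞ :=
  ⨆ φ ∈ {ψ : Φ | p ψ ≤ 1}, ENNReal.ofReal |f φ|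

/-- The unit ball `B_{p'}(1)` of the dual norm. -/
def dualBall (p : Seminorm ℝ Φ) : Set (Φ →L[ℝ] ℝ) :=
  {f | dualNorm p f ≤ 1}

/-- A `Φ'_β`-valued Lévy process: starts at `0` a.s., has independent and stationary
increments, Radon distributions, and distributions weakly continuous at `0`. -/
structure IsLevyProcess {Ω : Type*} [MeasurableSpace Ω]
    (P : Measure Ω) (L : ℝ → Ω → (Φ →L[ℝ] ℝ)) : Prop where
  measurable : ∀ t : ℝ, Measurable (L t)
  init : ∀ᵐ ω ∂P, L 0 ω = 0
  indepIncrements : ∀ (n : ℕ) (t : Fin (n + 1) → ℝ), Monotone t → 0 ≤ t 0 →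
    iIndepFun (m := fun _ => inferInstance) (fun i : Fin (n + 1) => fun ω =>
      if i = 0 then L (t 0) ω else L (t i) ω - L (t (i - 1)) ω) P
  stationary : ∀ s t : ℝ, 0 ≤ s → s ≤ t →
    P.map (fun ω => L t ω - L s ω) = P.map (L (t - s))
  radon : ∀ t : ℝ, 0 ≤ t → IsRadon (P.map (L t))
  weakCont : ∀ g : BoundedContinuousFunction (Φ →L[ℝ] ℝ) ℝ,
    Tendsto (fun t => ∫ f, g f ∂(P.map (L t))) (nhdsWithin 0 (Set.Ici 0)) (nhds (g 0))

/-- if `Φ'_β` is quasi-complete, every continuous convolution semigroup of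
Radon probability measures on `Φ'_β` is uniformly tight on compact time intervals. -/
theorem statement19 [BorelSpace (Φ →L[ℝ] ℝ)]
    -- `Φ'_β` is quasi-complete: bounded closed subsets are complete
    (hqc : ∀ s : Set (Φ →L[ℝ] ℝ), Bornology.IsVonNBounded ℝ s → IsClosed s →
      IsComplete s)
    (μ : ℝ → Measure (Φ →L[ℝ] ℝ))
    (hprob : ∀ t : ℝ, 0 ≤ t → IsProbabilityMeasure (μ t))
    (hradon : ∀ t : ℝ, 0 ≤ t → IsRadon (μ t))
    (hsg : ∀ s t : ℝ, 0 ≤ s → 0 ≤ t → conv' (μ s) (μ t) = μ (s + t))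
    (h0 : μ 0 = Measure.dirac 0)
    (hcont : ∀ t : ℝ, 0 ≤ t → ∀ g : BoundedContinuousFunction (Φ →L[ℝ] ℝ) ℝ,
      Tendsto (fun s => ∫ f, g f ∂(μ s)) (nhdsWithin t (Set.Ici 0))
        (nhds (∫ f, g f ∂(μ t)))) :
    ∀ T : ℝ, 0 < T → ∀ ε : ℝ≥0∞, 0 < ε →
      ∃ K : Set (Φ →L[ℝ] ℝ), IsCompact K ∧ ∀ t ∈ Set.Icc (0:ℝ) T, μ t Kᶜ < ε := by

    intro T hT ε hε
    classical
    haveI : IsProbabilityMeasure (μ T) := hprob T hT.le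
    set η : ℝ≥0∞ := min ε 1 / 8 with hηdef
    have hmin0 : min ε 1 ≠ 0 := by
      have : (0:ℝ≥0∞) < min ε 1 := lt_min hε zero_lt_one
      exact this.ne'
    have hη0 : η ≠ 0 := by
      rw [hηdef]
      simp [ENNReal.div_eq_zero_iff, hmin0]
    have hηpos : 0 < η := pos_iff_ne_zero.2 hη0
    have hηle : η ≤ 1 / 8 := by
      rw [hηdef]
      exact ENNReal.div_le_div_right (min_le_right _ _) 8
    have hηtop : η ≠ ∞ := (lt_of_le_of_lt hηle (by norm_num)).ne
    have hη8 : 8 * η = min ε 1 := by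
      rw [hηdef, mul_comm, ENNReal.div_mul_cancel (by norm_num) (by norm_num)]
    have h81 : (8:ℝ≥0∞) * (1/8) = 1 := by
      rw [mul_one_div]
      exact ENNReal.div_self (by norm_num) (by norm_num)
    have h2ηε : 2 * η ≤ ε := by
      calc 2 * η ≤ 8 * η := mul_le_mul_left (by norm_num) η
      _ = min ε 1 := hη8
      _ ≤ ε := min_le_left _ _
    have h5η : 2 * η + 3 * η < 1 := by
      have h1 : 2 * η + 3 * η = 5 * η := by ring
      have h2 : (5:ℝ≥0∞) * η ≤ 5 * (1/8) := mul_le_mul_right hηle 5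
      have h3 : (5:ℝ≥0∞) * (1/8) < 1 := by
        rw [mul_one_div]
        exact (ENNReal.div_lt_iff (Or.inl (by norm_num)) (Or.inl (by norm_num))).2 (by norm_num)
      rw [h1]; exact lt_of_le_of_lt h2 h3
    -- Step 0: a fixed compact set carrying most of μ T
    obtain ⟨K₀, -, hK₀c, hK₀m⟩ := hradon T hT.le Set.univ MeasurableSet.univ η hηpos
    set M : Set (Φ →L[ℝ] ℝ) := closure K₀ with hMdef
    have hMc : IsCompact M := hK₀c.closure
    have hMmeas : MeasurableSet M := isClosed_closure.measurableSet
    have hMsmall : μ T Mᶜ < η := by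
      refine lt_of_le_of_lt (measure_mono ?_) (by rwa [← Set.compl_eq_univ_diff] at hK₀m)
      exact Set.compl_subset_compl.2 subset_closure
    -- Step 1: choose approximate concentration points
    have hxex : ∀ s : ℝ, ∃ x : Φ →L[ℝ] ℝ,
        s ∈ Set.Icc (0:ℝ) T → μ s ((fun y => x + y) ⁻¹' Mᶜ) < 2 * η := by
      intro s
      by_cases hs : s ∈ Set.Icc (0:ℝ) T
      · haveI := hprob s hs.1
        haveI := hprob (T - s) (by linarith [hs.2])
        have hconv : conv' (μ (T - s)) (μ s) = μ T := by
          rw [hsg (T - s) s (by linarith [hs.2]) hs.1, sub_add_cancel]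
        obtain ⟨x, hx⟩ := conc_aux hconv hMmeas hMsmall
        exact ⟨x, fun _ => hx⟩
      · exact ⟨0, fun h => absurd h hs⟩
    choose x hx using hxex
    -- Step 2: local control of the concentration points
    have hlocal : ∀ V ∈ 𝓝 (0 : Φ →L[ℝ] ℝ), ∀ t ∈ Set.Icc (0:ℝ) T, ∃ δ > (0:ℝ),
        ∀ s ∈ Set.Icc (0:ℝ) T, |s - t| < δ →
          ∃ a ∈ M, ∃ b ∈ M, ∃ v ∈ V, x s = x t + (a - b - v) := by
      intro V hV t ht
      haveI := hprob t ht.1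
      set C : Set (Φ →L[ℝ] ℝ) := (fun y => x t + y) ⁻¹' M with hCdef
      have hCim : C = (fun m => m - x t) '' M := by
        ext y
        constructor
        · intro h
          exact ⟨x t + y, h, by show x t + y - x t = y; rw [add_sub_cancel_left]⟩
        · rintro ⟨m, hm, rfl⟩
          have heq : x t + (m - x t) = m := by rw [add_sub_cancel]
          show x t + (m - x t) ∈ M
          rw [heq]; exact hm
      have hCcomp : IsCompact C := by
        rw [hCim]
        exact hMc.image (continuous_id.sub continuous_const)
      have hCmeas : MeasurableSet C := hMmeas.preimage (continuous_const.add continuous_id).measurable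
      obtain ⟨g, hgcont, hg01, hgC, hgsupp⟩ := urysohn_aux hCcomp hV
      set G : BoundedContinuousFunction (Φ →L[ℝ] ℝ) ℝ :=
        BoundedContinuousFunction.ofNormedAddCommGroup g hgcont 1 (fun y => by
          rw [Real.norm_eq_abs, abs_le]
          exact ⟨by linarith [(hg01 y).1], (hg01 y).2⟩) with hGdef
      have hGcoe : ∀ y, G y = g y := fun y => rfl
      -- lower bound for the integral at time t
      have hCsmall : μ t Cᶜ < 2 * η := by
        rw [hCdef, ← Set.preimage_compl]
        exact hx t ht
      have hμtC : 1 - 2 * η ≤ μ t C := by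
        have h1 : μ t C + μ t Cᶜ = 1 := by
          rw [measure_add_measure_compl hCmeas, measure_univ]
        have h2 : (1:ℝ≥0∞) ≤ μ t C + 2 * η := by
          rw [← h1]; exact add_le_add_right hCsmall.le _
        exact tsub_le_iff_right.2 h2
      have h2η1 : 2 * η ≤ 1 := by
        calc 2*η ≤ 8*η := mul_le_mul_left (by norm_num) η
        _ ≤ 8 * (1/8) := mul_le_mul_right hηle 8
        _ = 1 := h81
      have hintt : 1 - (2*η).toReal ≤ ∫ f, G f ∂(μ t) := by
        have hind : ∫ f, Set.indicator C (fun _ => (1:ℝ)) f ∂(μ t) = (μ t C).toReal := by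
          rw [integral_indicator_const (1:ℝ) hCmeas, smul_eq_mul, mul_one, measureReal_def]
        have hmono : ∫ f, Set.indicator C (fun _ => (1:ℝ)) f ∂(μ t) ≤ ∫ f, G f ∂(μ t) := by
          refine integral_mono ((integrable_const (1:ℝ)).indicator hCmeas) (G.integrable _) ?_
          intro y
          by_cases hy : y ∈ C
          · rw [Set.indicator_of_mem hy, hGcoe, hgC y hy]
          · rw [Set.indicator_of_notMem hy, hGcoe]
            exact (hg01 y).1
        have htr : 1 - (2*η).toReal ≤ (μ t C).toReal := by
          have := ENNReal.toReal_mono (measure_ne_top _ _) hμtC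
          rwa [ENNReal.toReal_sub_of_le h2η1 (by norm_num), ENNReal.toReal_one] at this
        linarith [hmono, hind ▸ hmono, htr, hind.ge.trans hmono]
      have h23 : (2*η).toReal < (3*η).toReal := by
        refine ENNReal.toReal_lt_toReal (ENNReal.mul_ne_top (by norm_num) hηtop)
          (ENNReal.mul_ne_top (by norm_num) hηtop) |>.2 ?_
        rw [mul_comm 2 η, mul_comm 3 η]; exact ENNReal.mul_lt_mul_right hη0 hηtop (by norm_num)
      have hev : ∀ᶠ s in nhdsWithin t (Set.Ici 0),
          1 - (3*η).toReal < ∫ f, G f ∂(μ s) := by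
        refine (hcont t ht.1 G).eventually (eventually_gt_nhds ?_)
        linarith
      obtain ⟨δ, hδpos, hδ⟩ := Metric.mem_nhdsWithin_iff.1 hev
      refine ⟨δ, hδpos, fun s hs hst => ?_⟩
      haveI := hprob s hs.1
      have hsball : s ∈ Metric.ball t δ ∩ Set.Ici 0 :=
        ⟨by rwa [Metric.mem_ball, Real.dist_eq], hs.1⟩
      have hints : 1 - (3*η).toReal < ∫ f, G f ∂(μ s) := hδ hsball
      -- the support of g carries mass > 1 - 3η under μ s
      set B : Set (Φ →L[ℝ] ℝ) := {y | g y ≠ 0} with hBdef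
      have hBmeas : MeasurableSet B :=
        (hgcont.measurable (measurableSet_singleton 0).compl)
      have hintB : ∫ f, G f ∂(μ s) ≤ (μ s B).toReal := by
        have hind : ∫ f, Set.indicator B (fun _ => (1:ℝ)) f ∂(μ s) = (μ s B).toReal := by
          rw [integral_indicator_const (1:ℝ) hBmeas, smul_eq_mul, mul_one, measureReal_def]
        rw [← hind]
        refine integral_mono (G.integrable _) ((integrable_const (1:ℝ)).indicator hBmeas) ?_
        intro y
        by_cases hy : y ∈ B
        · rw [Set.indicator_of_mem hy, hGcoe]; exact (hg01 y).2
        · rw [Set.indicator_of_notMem hy, hGcoe]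
          have : g y = 0 := by simpa [hBdef] using hy
          rw [this]
      have h3η1 : 3 * η ≤ 1 := by
        calc 3*η ≤ 8*η := mul_le_mul_left (by norm_num) η
        _ ≤ 8 * (1/8) := mul_le_mul_right hηle 8
        _ = 1 := h81
      have hμsB : 1 - 3 * η < μ s B := by
        rw [← ENNReal.toReal_lt_toReal (by simp [ENNReal.sub_ne_top]) (measure_ne_top _ _),
          ENNReal.toReal_sub_of_le h3η1 (by norm_num), ENNReal.toReal_one]
        linarith
      have hμsBc : μ s Bᶜ < 3 * η := by
        rw [prob_compl_eq_one_sub hBmeas]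
        have h1 : (1:ℝ≥0∞) < μ s B + 3*η :=
          (ENNReal.sub_lt_iff_lt_right (ENNReal.mul_ne_top (by norm_num) hηtop) h3η1).1 hμsB
        refine (ENNReal.sub_lt_iff_lt_right (measure_ne_top _ _) prob_le_one).2 ?_
        rwa [add_comm]
      -- intersect the two large sets
      have hAc : μ s ((fun y => x s + y) ⁻¹' M)ᶜ < 2 * η := by
        rw [← Set.preimage_compl]
        exact hx s hs
      have hsum : μ s ((fun y => x s + y) ⁻¹' M)ᶜ + μ s Bᶜ < 1 :=
        lt_trans (ENNReal.add_lt_add hAc hμsBc) h5η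
      obtain ⟨z, hzA, hzB⟩ := inter_nonempty_aux hsum
      obtain ⟨c, hcC, hzc⟩ := hgsupp z hzB
      exact ⟨x s + z, hzA, x t + c, hcC, z - c, hzc, by abel⟩
    -- Step 3: the set of concentration points is totally bounded
    have hRtb : TotallyBounded (x '' Set.Icc (0:ℝ) T) := by
      rw [totallyBounded_iff_subset_finite_iUnion_nhds_zero]
      intro U hU
      obtain ⟨V₁, hV₁, hV₁add⟩ := exists_nhds_zero_half hU
      have hVnegmem : (fun v : Φ →L[ℝ] ℝ => -v) ⁻¹' V₁ ∈ 𝓝 (0 : Φ →L[ℝ] ℝ) :=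
        (continuous_neg.tendsto' (0 : Φ →L[ℝ] ℝ) 0 neg_zero) hV₁
      set V : Set (Φ →L[ℝ] ℝ) := V₁ ∩ (fun v => -v) ⁻¹' V₁ with hVdef
      have hVmem : V ∈ 𝓝 (0 : Φ →L[ℝ] ℝ) := Filter.inter_mem hV₁ hVnegmem
      have hδex : ∀ t : ℝ, ∃ δ : ℝ, 0 < δ ∧ (t ∈ Set.Icc (0:ℝ) T →
          ∀ s ∈ Set.Icc (0:ℝ) T, |s - t| < δ →
            ∃ a ∈ M, ∃ b ∈ M, ∃ v ∈ V, x s = x t + (a - b - v)) := by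
        intro t
        by_cases ht : t ∈ Set.Icc (0:ℝ) T
        · obtain ⟨δ, hδpos, hδ⟩ := hlocal V hVmem t ht
          exact ⟨δ, hδpos, fun _ => hδ⟩
        · exact ⟨1, one_pos, fun h => absurd h ht⟩
      choose δ hδpos hδP using hδex
      have hcover : Set.Icc (0:ℝ) T ⊆ ⋃ t ∈ Set.Icc (0:ℝ) T, Metric.ball t (δ t) :=
        fun t ht => Set.mem_iUnion₂.2 ⟨t, ht, by simp [Metric.mem_ball, hδpos t]⟩
      obtain ⟨F, hFsub, hFfin, hFcov⟩ := isCompact_Icc.elim_finite_subcover_image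
        (fun t _ => Metric.isOpen_ball) hcover
      set D0 : Set (Φ →L[ℝ] ℝ) := (fun p : (Φ →L[ℝ] ℝ) × (Φ →L[ℝ] ℝ) => p.1 - p.2) '' (M ×ˢ M)
        with hD0def
      have hD0comp : IsCompact D0 := (hMc.prod hMc).image continuous_sub
      set Q : Set (Φ →L[ℝ] ℝ) := ⋃ t ∈ F, (fun w => x t + w) '' D0 with hQdef
      have hQcomp : IsCompact Q := hFfin.isCompact_biUnion
        (fun t _ => hD0comp.image (continuous_const.add continuous_id))
      obtain ⟨F', hF'fin, hF'cov⟩ :=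
        totallyBounded_iff_subset_finite_iUnion_nhds_zero.1 hQcomp.totallyBounded V₁ hV₁
      refine ⟨F', hF'fin, ?_⟩
      rintro _ ⟨s, hs, rfl⟩
      obtain ⟨t, htF, hst⟩ := Set.mem_iUnion₂.1 (hFcov hs)
      have htIcc : t ∈ Set.Icc (0:ℝ) T := hFsub htF
      have hst' : |s - t| < δ t := by
        rw [← Real.dist_eq]
        exact hst
      obtain ⟨a, ha, b, hb, v, hv, hxs⟩ := hδP t htIcc s hs hst'
      have hmemQ : x t + (a - b) ∈ Q :=
        Set.mem_iUnion₂.2 ⟨t, htF, ⟨a - b, ⟨(a, b), ⟨ha, hb⟩, rfl⟩, rfl⟩⟩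
      obtain ⟨y, hyF', hyy⟩ := Set.mem_iUnion₂.1 (hF'cov hmemQ)
      obtain ⟨w, hw, hw'⟩ := Set.mem_vadd_set.1 hyy
      refine Set.mem_iUnion₂.2 ⟨y, hyF', Set.mem_vadd_set.2 ⟨w + -v, hV₁add w hw (-v) hv.2, ?_⟩⟩
      rw [vadd_eq_add] at hw' ⊢
      rw [hxs, show x t + (a - b - v) = x t + (a - b) + -v from by abel, ← hw']
      abel
    -- Step 4: conclusion
    have hRcl : IsCompact (closure (x '' Set.Icc (0:ℝ) T)) :=
      isCompact_iff_totallyBounded_isComplete.2 ⟨hRtb.closure,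
        hqc _ (hRtb.closure.isVonNBounded ℝ) isClosed_closure⟩
    set N : Set (Φ →L[ℝ] ℝ) := (fun p : (Φ →L[ℝ] ℝ) × (Φ →L[ℝ] ℝ) => p.1 - p.2) ''
      (M ×ˢ closure (x '' Set.Icc (0:ℝ) T)) with hNdef
    have hNcomp : IsCompact N := (hMc.prod hRcl).image continuous_sub
    refine ⟨closure N, hNcomp.closure, ?_⟩
    intro t ht
    have hsub : (fun y => x t + y) ⁻¹' M ⊆ closure N := by
      intro y hy
      refine subset_closure ⟨(x t + y, x t), ⟨hy, subset_closure ⟨t, ht, rfl⟩⟩, ?_⟩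
      show x t + y - x t = y
      rw [add_sub_cancel_left]
    calc μ t (closure N)ᶜ ≤ μ t ((fun y => x t + y) ⁻¹' M)ᶜ :=
          measure_mono (Set.compl_subset_compl.2 hsub)
      _ = μ t ((fun y => x t + y) ⁻¹' Mᶜ) := by rw [Set.preimage_compl]
      _ < 2 * η := hx t ht
      _ ≤ ε := h2ηε
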